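/- In any schedule of batches on a single machine (without idle-time advantage), if two batches of the same family both contain strictly fewer than N_j^b jobs, where any N_j^b jobs of the family fit within capacity, then moving a job from the later batch to the earlier batch yields a feasible schedule whose total weighted completion time is strictly smaller (assuming all weights are positive). -/

import Mathlib

/-- A batch: a family label together with the set of jobs loaded in it. -/
abbrev Batch (ι : Type*) (m : ℕ) := Fin m × Finset ι

/-- A schedule of batches (possibly empty batches allowed) on a single
parallel-batching machine: each batch contains only jobs of its family,
respects capacity, and every job is in exactly one batch. -/
structure BatchSchedule {ι : Type*} (m : ℕ) (fam : ι → Fin m) (v : ι → ℝ) (V : ℝ) where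
  batches : List (Batch ι m)
  mem_family : ∀ b ∈ batches, ∀ i ∈ b.2, fam i = b.1
  capacity : ∀ b ∈ batches, ∑ i ∈ b.2, v i ≤ V
  partition : ∀ i : ι, ∃! k : Fin batches.length, i ∈ (batches.get k).2

/-- Completion time of the `k`-th batch when batches are processed back to back
from time 0. -/
noncomputable def completionTime {ι : Type*} {m : ℕ} (q : Fin m → ℝ)
    (bs : List (Batch ι m)) (k : Fin bs.length) : ℝ :=
  ∑ l : Fin bs.length, if l.1 ≤ k.1 then q (bs.get l).1 else 0

/-- Total weighted completion time of the schedule. -/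
noncomputable def batchObj {ι : Type*} {m : ℕ} (q : Fin m → ℝ) (w : ι → ℝ)
    (bs : List (Batch ι m)) : ℝ :=
  ∑ k : Fin bs.length, (∑ i ∈ (bs.get k).2, w i) * completionTime q bs k

/-- If two batches `k, k'` of the same family `j` both contain
strictly fewer than `Nb j` jobs, where any `Nb j` jobs of family `j` fit within
capacity, and batch `k` completes earlier than batch `k'`, then moving a job `i₀`
from the later batch `k'` to the earlier batch `k` yields a feasible schedule
whose total weighted completion time is strictly smaller (all weights positive). -/
theorem move_job_to_earlier_batch_strictly_improves
    {ι : Type*} [DecidableEq ι] {m : ℕ}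
    (fam : ι → Fin m) (v w : ι → ℝ) (V : ℝ) (q : Fin m → ℝ)
    (hw : ∀ i, 0 < w i)
    (σ : BatchSchedule m fam v V) (j : Fin m)
    (Nb : ℕ)
    (hNb : ∀ S : Finset ι, (∀ i ∈ S, fam i = j) → S.card ≤ Nb → ∑ i ∈ S, v i ≤ V)
    (k k' : Fin σ.batches.length)
    (hkj : (σ.batches.get k).1 = j) (hk'j : (σ.batches.get k').1 = j)
    (hkcard : (σ.batches.get k).2.card < Nb)
    (hk'card : (σ.batches.get k').2.card < Nb)
    (hearlier : completionTime q σ.batches k < completionTime q σ.batches k')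
    (i₀ : ι) (hi₀ : i₀ ∈ (σ.batches.get k').2) :
    ∃ σ' : BatchSchedule m fam v V,
      σ'.batches =
        ((σ.batches.set k'.1 (j, (σ.batches.get k').2.erase i₀)).set k.1
          (j, insert i₀ (σ.batches.get k).2)) ∧
      batchObj q w σ'.batches < batchObj q w σ.batches := by
  classical
  set bs2 : List (Batch ι m) :=
    ((σ.batches.set k'.1 (j, (σ.batches.get k').2.erase i₀)).set k.1
      (j, insert i₀ (σ.batches.get k).2)) with hbs2
  have len2 : bs2.length = σ.batches.length := by simp [hbs2]
  have hne : k.1 ≠ k'.1 := by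
    intro h
    have hkk : k = k' := Fin.ext h
    rw [hkk] at hearlier
    exact lt_irrefl _ hearlier
  have hget : ∀ (l : ℕ) (hl : l < bs2.length),
      bs2[l] = if k.1 = l then (j, insert i₀ ((σ.batches.get k).2))
        else if k'.1 = l then (j, ((σ.batches.get k').2.erase i₀))
        else σ.batches[l]'(lt_of_lt_of_eq hl len2) := by
    intro l hl
    simp only [hbs2, List.getElem_set]
  have hfam_i₀ : fam i₀ = j := by
    have h := σ.mem_family (σ.batches.get k')
      (by rw [List.get_eq_getElem]; exact List.getElem_mem _) i₀ hi₀
    rw [hk'j] at h; exact h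
  have hi₀k : i₀ ∉ (σ.batches.get k).2 := by
    intro h
    obtain ⟨c, hc, hu⟩ := σ.partition i₀
    exact hne (congrArg Fin.val ((hu k h).trans (hu k' hi₀).symm))
  -- first components agree
  have hfst : ∀ (l : ℕ) (hl : l < bs2.length),
      (bs2[l]).1 = (σ.batches[l]'(lt_of_lt_of_eq hl len2)).1 := by
    intro l hl
    rw [hget l hl]
    split_ifs with h1 h2
    · subst h1
      rw [show (σ.batches[(k : ℕ)]'(lt_of_lt_of_eq hl len2)) = σ.batches.get k from
        List.get_eq_getElem.symm]
      exact hkj.symm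
    · subst h2
      rw [show (σ.batches[(k' : ℕ)]'(lt_of_lt_of_eq hl len2)) = σ.batches.get k' from
        List.get_eq_getElem.symm]
      exact hk'j.symm
    · rfl
  -- completion times agree
  have hC : ∀ (c : Fin bs2.length),
      completionTime q bs2 c = completionTime q σ.batches (Fin.cast len2 c) := by
    intro c
    unfold completionTime
    refine Fintype.sum_equiv (finCongr len2) _ _ ?_
    intro x
    simp only [finCongr_apply, Fin.coe_cast, List.get_eq_getElem]
    by_cases hx : x.1 ≤ c.1
    · simp only [hx, if_true]
      rw [hfst x.1 x.2]
    · simp [hx]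
  -- membership unchanged for i ≠ i₀
  have hmem : ∀ (i : ι) (l : ℕ) (hl : l < bs2.length), i ≠ i₀ →
      (i ∈ (bs2[l]).2 ↔ i ∈ (σ.batches[l]'(lt_of_lt_of_eq hl len2)).2) := by
    intro i l hl hni
    rw [hget l hl]
    split_ifs with h1 h2
    · subst h1
      rw [show (σ.batches[(k : ℕ)]'(lt_of_lt_of_eq hl len2)) = σ.batches.get k from
        List.get_eq_getElem.symm]
      simp [Finset.mem_insert, hni]
    · subst h2
      rw [show (σ.batches[(k' : ℕ)]'(lt_of_lt_of_eq hl len2)) = σ.batches.get k' from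
        List.get_eq_getElem.symm]
      simp [Finset.mem_erase, hni]
    · rfl
  refine ⟨⟨bs2, ?_, ?_, ?_⟩, rfl, ?_⟩
  · -- mem_family
    intro b hb i hi
    rw [List.mem_iff_getElem] at hb
    obtain ⟨l, hl, rfl⟩ := hb
    rw [hget l hl] at hi ⊢
    split_ifs at hi ⊢ with h1 h2
    · rcases Finset.mem_insert.1 hi with rfl | hi'
      · exact hfam_i₀
      · have := σ.mem_family (σ.batches.get k)
          (by rw [List.get_eq_getElem]; exact List.getElem_mem _) i hi'
        rw [hkj] at this; exact this
    · have hi' := Finset.mem_of_mem_erase hi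
      have := σ.mem_family (σ.batches.get k')
        (by rw [List.get_eq_getElem]; exact List.getElem_mem _) i hi'
      rw [hk'j] at this; exact this
    · exact σ.mem_family _ (List.getElem_mem _) i hi
  · -- capacity
    intro b hb
    rw [List.mem_iff_getElem] at hb
    obtain ⟨l, hl, rfl⟩ := hb
    rw [hget l hl]
    split_ifs with h1 h2
    · refine hNb _ ?_ ?_
      · intro i hi
        rcases Finset.mem_insert.1 hi with rfl | hi'
        · exact hfam_i₀
        · have := σ.mem_family (σ.batches.get k)
            (by rw [List.get_eq_getElem]; exact List.getElem_mem _) i hi'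
          rw [hkj] at this; exact this
      · calc (insert i₀ (σ.batches.get k).2).card
            ≤ (σ.batches.get k).2.card + 1 := Finset.card_insert_le _ _
          _ ≤ Nb := hkcard
    · refine hNb _ ?_ ?_
      · intro i hi
        have hi' := Finset.mem_of_mem_erase hi
        have := σ.mem_family (σ.batches.get k')
          (by rw [List.get_eq_getElem]; exact List.getElem_mem _) i hi'
        rw [hk'j] at this; exact this
      · exact le_of_lt (lt_of_le_of_lt (Finset.card_erase_le) hk'card)
    · exact σ.capacity _ (List.getElem_mem _)
  · -- partition
    intro i
    by_cases hii : i = i₀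
    · subst hii
      refine ⟨⟨k.1, lt_of_lt_of_eq k.2 len2.symm⟩, ?_, ?_⟩
      · show i ∈ (bs2.get _).2
        rw [List.get_eq_getElem, hget k.1 (lt_of_lt_of_eq k.2 len2.symm)]
        simp
      · intro d hd
        rw [List.get_eq_getElem, hget d.1 d.2] at hd
        split_ifs at hd with h1 h2
        · exact Fin.ext h1.symm
        · exact absurd hd (Finset.notMem_erase _ _)
        · exfalso
          obtain ⟨c, hc, hu⟩ := σ.partition i
          have hd' : i ∈ (σ.batches.get ⟨d.1, lt_of_lt_of_eq d.2 len2⟩).2 := by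
            rw [List.get_eq_getElem]; exact hd
          have e1 := hu ⟨d.1, lt_of_lt_of_eq d.2 len2⟩ hd'
          have e2 := hu k' hi₀
          exact h2 (congrArg Fin.val (e2.trans e1.symm))
    · obtain ⟨c, hc, hu⟩ := σ.partition i
      refine ⟨⟨c.1, lt_of_lt_of_eq c.2 len2.symm⟩, ?_, ?_⟩
      · show i ∈ (bs2.get _).2
        rw [List.get_eq_getElem]
        refine (hmem i c.1 _ hii).2 ?_
        rw [List.get_eq_getElem] at hc
        exact hc
      · intro d hd
        rw [List.get_eq_getElem] at hd
        have hd' := (hmem i d.1 d.2 hii).1 hd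
        have : i ∈ (σ.batches.get ⟨d.1, lt_of_lt_of_eq d.2 len2⟩).2 := by
          rw [List.get_eq_getElem]; exact hd'
        have e := hu ⟨d.1, lt_of_lt_of_eq d.2 len2⟩ this
        have hdc : (d : ℕ) = (c : ℕ) := congrArg Fin.val e
        exact Fin.ext hdc
  · -- objective strictly decreases
    have key : batchObj q w bs2 =
        batchObj q w σ.batches
          + w i₀ * completionTime q σ.batches k
          - w i₀ * completionTime q σ.batches k' := by
      unfold batchObj
      rw [show (∑ c : Fin bs2.length,
            (∑ i ∈ (bs2.get c).2, w i) * completionTime q bs2 c)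
          = ∑ c : Fin σ.batches.length,
            ((∑ i ∈ (σ.batches.get c).2, w i)
              + (if c = k then w i₀ else 0)
              - (if c = k' then w i₀ else 0)) * completionTime q σ.batches c from ?_]
      · have hsplit : ∀ c : Fin σ.batches.length,
            ((∑ i ∈ (σ.batches.get c).2, w i) + (if c = k then w i₀ else 0)
                - (if c = k' then w i₀ else 0)) * completionTime q σ.batches c
            = (∑ i ∈ (σ.batches.get c).2, w i) * completionTime q σ.batches c
              + (if c = k then w i₀ * completionTime q σ.batches c else 0)
              - (if c = k' then w i₀ * completionTime q σ.batches c else 0) := by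
          intro c
          split_ifs <;> ring
        rw [Finset.sum_congr rfl (fun c _ => hsplit c)]
        rw [Finset.sum_sub_distrib, Finset.sum_add_distrib,
          Finset.sum_ite_eq' Finset.univ k, Finset.sum_ite_eq' Finset.univ k']
        simp [batchObj]
      · refine Fintype.sum_equiv (finCongr len2) _ _ ?_
        intro c
        simp only [finCongr_apply]
        rw [hC c]
        congr 1
        rw [show (bs2.get c).2 = (bs2[c.1]).2 from by rw [List.get_eq_getElem],
          hget c.1 c.2]
        by_cases h1 : (k : ℕ) = (c : ℕ)
        · have hck : Fin.cast len2 c = k := Fin.ext h1.symm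
          rw [if_pos h1]
          have hkk'2 : ¬ (k = k') := fun h => hne (congrArg Fin.val h)
          simp only [hck, hkk'2, eq_self_iff_true, if_true, if_false, ite_true,
            ite_false]
          rw [Finset.sum_insert hi₀k]
          ring
        · rw [if_neg h1]
          have h1' : ¬ Fin.cast len2 c = k := fun h => h1 (congrArg Fin.val h).symm
          by_cases h2 : (k' : ℕ) = (c : ℕ)
          · have hck : Fin.cast len2 c = k' := Fin.ext h2.symm
            rw [if_pos h2]
            have hk'k2 : ¬ (k' = k) := fun h => hne (congrArg Fin.val h.symm)
            simp only [hck, hk'k2, eq_self_iff_true, if_true, if_false, ite_true,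
              ite_false]
            rw [Finset.sum_erase_eq_sub hi₀]
            ring
          · have h2' : ¬ Fin.cast len2 c = k' := fun h => h2 (congrArg Fin.val h).symm
            rw [if_neg h2, if_neg h1', if_neg h2', add_zero, sub_zero]
            simp only [List.get_eq_getElem, Fin.coe_cast]
    rw [key]
    have hpos := hw i₀
    nlinarith [hearlier]
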